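/- On ℝ⁴ ≅ ℍ with quaternionic coordinate x, the 1-form A = Im(x dx̄/(1+|x|²)) with values in the imaginary quaternions has curvature F = dA + A∧A = dx∧dx̄/(1+|x|²)², and this curvature is self-dual with respect to the standard Euclidean metric and orientation. -/

import Mathlib

/-!
Statement 17: on ℝ⁴ ≅ ℍ the 1-form A = Im(x dx̄/(1+|x|²)) has curvature
F = dA + A∧A = dx∧dx̄/(1+|x|²)², and F is self-dual.

A 1-form is a map assigning to x and a tangent vector u a quaternion; here
A x u = (1+‖x‖²)⁻¹ Im(x·ū), dx∧dx̄ evaluated on (u,v) is u·v̄ − v·ū, the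
exterior derivative is computed with fderiv, (A∧A)(u,v) = A(u)A(v) − A(v)A(u),
and self-duality is the condition F(1,i) = F(j,k), F(1,j) = F(k,i),
F(1,k) = F(i,j) on the standard oriented orthonormal basis 1,i,j,k of ℍ.
-/

open Quaternion
open scoped Quaternion

noncomputable section

def qi : ℍ[ℝ] := ⟨0, 1, 0, 0⟩
def qj : ℍ[ℝ] := ⟨0, 0, 1, 0⟩
def qk : ℍ[ℝ] := ⟨0, 0, 0, 1⟩

/-- The basic instanton 1-form A = Im(x dx̄/(1+|x|²)). -/
def A (x u : ℍ[ℝ]) : ℍ[ℝ] := (1 + ‖x‖ ^ 2)⁻¹ • (x * star u).im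

/-- The curvature F = dA + A∧A of a 1-form A', evaluated on tangent vectors u, v. -/
def curv (A' : ℍ[ℝ] → ℍ[ℝ] → ℍ[ℝ]) (x u v : ℍ[ℝ]) : ℍ[ℝ] :=
  fderiv ℝ (fun y => A' y v) x u - fderiv ℝ (fun y => A' y u) x v
    + (A' x u * A' x v - A' x v * A' x u)

def imCLM : ℍ[ℝ] →L[ℝ] ℍ[ℝ] where
  toFun := Quaternion.im
  map_add' a b := by ext <;> simp
  map_smul' s a := by ext <;> simp
  cont := Quaternion.continuous_im

def mulStarCLM (v : ℍ[ℝ]) : ℍ[ℝ] →L[ℝ] ℍ[ℝ] where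
  toFun y := y * star v
  map_add' a b := add_mul a b (star v)
  map_smul' s a := by simp [smul_mul_assoc]
  cont := continuous_id.mul continuous_const

def reCLM : ℍ[ℝ] →L[ℝ] ℝ where
  toFun := QuaternionAlgebra.re
  map_add' _ _ := rfl
  map_smul' _ _ := rfl
  cont := Quaternion.continuous_re

def starCLM : ℍ[ℝ] →L[ℝ] ℍ[ℝ] where
  toFun := star
  map_add' := star_add
  map_smul' s a := by simp
  cont := continuous_star

lemma norm_sq_eq (y : ℍ[ℝ]) : ‖y‖ ^ 2 = (y * star y).re := by
  rw [Quaternion.self_mul_star]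
  simp [Quaternion.normSq_eq_norm_mul_self, sq]

lemma hasFDerivAt_nsq (x : ℍ[ℝ]) :
    HasFDerivAt (fun y : ℍ[ℝ] => 1 + ‖y‖ ^ 2)
      (reCLM.comp (x • starCLM + (ContinuousLinearMap.id ℝ ℍ[ℝ]).smulRight (star x))) x := by
  have h1 : HasFDerivAt (fun y : ℍ[ℝ] => y) (ContinuousLinearMap.id ℝ ℍ[ℝ]) x := hasFDerivAt_id x
  have hst : HasFDerivAt (fun y : ℍ[ℝ] => star y) starCLM x := starCLM.hasFDerivAt
  have hre := reCLM.hasFDerivAt.comp x (h1.mul' hst)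
  have := hre.const_add 1
  simp only [norm_sq_eq]
  rw [show (ContinuousLinearMap.id ℝ ℍ[ℝ]).smulRight (star x) = MulOpposite.op (star x) • ContinuousLinearMap.id ℝ ℍ[ℝ] from ContinuousLinearMap.ext fun w => rfl]
  exact this

lemma nsq_pos (x : ℍ[ℝ]) : 0 < 1 + ‖x‖ ^ 2 := by positivity

lemma fderiv_A_apply (v x u : ℍ[ℝ]) :
    fderiv ℝ (fun y => A y v) x u =
      (1 + ‖x‖ ^ 2)⁻¹ • (u * star v).im
        - (((1 + ‖x‖ ^ 2) ^ 2)⁻¹ * (2 * (x * star u).re)) • (x * star v).im := by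
  have hc := (hasFDerivAt_inv' (𝕜 := ℝ) (nsq_pos x).ne').comp x (hasFDerivAt_nsq x)
  have hm : HasFDerivAt (fun y => (y * star v).im) (imCLM.comp (mulStarCLM v)) x :=
    (imCLM.comp (mulStarCLM v)).hasFDerivAt
  have hA := hc.smul hm
  have heq : (fun y => A y v) = fun y => ((fun w : ℝ => w⁻¹) ∘ fun y : ℍ[ℝ] => 1 + ‖y‖ ^ 2) y • (y * star v).im := rfl
  rw [heq, show (fun y => ((fun w : ℝ => w⁻¹) ∘ fun y : ℍ[ℝ] => 1 + ‖y‖ ^ 2) y • (y * star v).im) = ((Inv.inv ∘ fun y : ℍ[ℝ] => 1 + ‖y‖ ^ 2) • fun y => (y * star v).im) from rfl, hA.fderiv]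
  simp [imCLM, mulStarCLM, show ∀ q : ℍ[ℝ], reCLM q = q.re from fun q => rfl, starCLM, ContinuousLinearMap.smulRight_apply,
    ContinuousLinearMap.mulLeftRight_apply, smul_smul]
  rw [sub_eq_add_neg, ← neg_smul]
  congr 1
  field_simp
  ring

lemma quad_identity (x u v : ℍ[ℝ]) :
    (2 * (x * star v).re) • (x * star u).im - (2 * (x * star u).re) • (x * star v).im
      + ((x * star u).im * (x * star v).im - (x * star v).im * (x * star u).im)
    = -(normSq x) • (u * star v - v * star u) := by
  ext <;>
  simp [Quaternion.normSq_def', Quaternion.re_mul, Quaternion.imI_mul, Quaternion.imJ_mul,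
    Quaternion.imK_mul] <;> ring

lemma im_sub_im (u v : ℍ[ℝ]) :
    (u * star v).im - (v * star u).im = u * star v - v * star u := by
  ext <;> simp [Quaternion.re_mul, Quaternion.imI_mul, Quaternion.imJ_mul, Quaternion.imK_mul] <;>
    ring

lemma curv_A (x u v : ℍ[ℝ]) :
    curv A x u v = ((1 + ‖x‖ ^ 2) ^ 2)⁻¹ • (u * star v - v * star u) := by
  have hn : (1 + ‖x‖ ^ 2) ≠ 0 := (nsq_pos x).ne'
  have hns : normSq x = (1 + ‖x‖ ^ 2) - 1 := by
    rw [Quaternion.normSq_eq_norm_mul_self]; ring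
  have hq := quad_identity x u v
  rw [hns] at hq
  have hD := im_sub_im u v
  rw [curv, fderiv_A_apply, fderiv_A_apply]
  simp only [A, smul_mul_smul_comm]
  set n := 1 + ‖x‖ ^ 2 with hnn
  set a := (x * star u).im
  set b := (x * star v).im
  set D := u * star v - v * star u
  have key : n⁻¹ • (u * star v).im - ((n ^ 2)⁻¹ * (2 * (x * star u).re)) • b -
      (n⁻¹ • (v * star u).im - ((n ^ 2)⁻¹ * (2 * (x * star v).re)) • a) +
      ((n⁻¹ * n⁻¹) • (a * b) - (n⁻¹ * n⁻¹) • (b * a)) =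
      n⁻¹ • ((u * star v).im - (v * star u).im) +
        (n ^ 2)⁻¹ • ((2 * (x * star v).re) • a - (2 * (x * star u).re) • b + (a * b - b * a)) := by
    match_scalars <;> field_simp <;> ring
  rw [key, hq, hD]
  match_scalars <;> (field_simp; ring)

theorem basic_instanton_curvature_selfdual :
    (∀ x u v : ℍ[ℝ],
      curv A x u v = ((1 + ‖x‖ ^ 2) ^ 2)⁻¹ • (u * star v - v * star u)) ∧
    (∀ x : ℍ[ℝ],
      curv A x 1 qi = curv A x qj qk ∧
      curv A x 1 qj = curv A x qk qi ∧
      curv A x 1 qk = curv A x qi qj) := by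
  refine ⟨curv_A, fun x => ?_⟩
  simp only [curv_A]
  refine ⟨?_, ?_, ?_⟩ <;>
    (congr 1; ext <;>
      simp [Quaternion.re_mul, Quaternion.imI_mul, Quaternion.imJ_mul,
        Quaternion.imK_mul, show qi.re = 0 from rfl, show qi.imI = 1 from rfl, show qi.imJ = 0 from rfl, show qi.imK = 0 from rfl,
        show qj.re = 0 from rfl, show qj.imI = 0 from rfl, show qj.imJ = 1 from rfl, show qj.imK = 0 from rfl,
        show qk.re = 0 from rfl, show qk.imI = 0 from rfl, show qk.imJ = 0 from rfl, show qk.imK = 1 from rfl])
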